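/- In the midpoint region of the two vs. one game, with β = cos(φ(s_mid))/ν and |β| < 1, the derivative of J_mid = (1/2)d_ccw(s_{D_i},s_{D_j}) − ‖γ(s_mid) − x_A‖/ν equals (1/2)((1−β)ω_{D_j} − (1+β)ω_{D_i}) + (1/ν)·û·u_A, where û is the unit vector from x_A to γ(s_mid). Consequently (ω_{D_i}, ω_{D_j}) = (1,−1) minimizes and u_A = ν·û maximizes this expression, and at the saddle point the derivative is zero: (1/2)(−(1−β) − (1+β)) + 1 = 0. -/

import Mathlib

open Real Set
open scoped InnerProductSpace

noncomputable section

abbrev E2 := EuclideanSpace ℝ (Fin 2)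

private lemma hasDerivAt_norm_aux {f : ℝ → E2} {f' : E2} {t : ℝ}
    (hf : HasDerivAt f f' t) (h0 : f t ≠ 0) :
    HasDerivAt (fun τ => ‖f τ‖) (⟪f t, f'⟫_ℝ / ‖f t‖) t := by
  have hpos : (0:ℝ) < ‖f t‖ := norm_pos_iff.mpr h0
  have h1 : HasDerivAt (fun τ => ‖f τ‖ ^ 2) (2 * ⟪f t, f'⟫_ℝ) t := hf.norm_sq
  have h2 := (Real.hasDerivAt_sqrt (by positivity : ‖f t‖ ^ 2 ≠ 0)).comp t h1
  have heq : (fun τ => Real.sqrt (‖f τ‖ ^ 2)) = fun τ => ‖f τ‖ := by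
    funext τ; exact Real.sqrt_sq (norm_nonneg _)
  have hsq : Real.sqrt (‖f t‖ ^ 2) = ‖f t‖ := Real.sqrt_sq (norm_nonneg _)
  rw [Function.comp_def, heq] at h2
  have hval : ⟪f t, f'⟫_ℝ / ‖f t‖ = 1 / (2 * √(‖f t‖ ^ 2)) * (2 * ⟪f t, f'⟫_ℝ) := by
    rw [hsq]
    field_simp
  rw [hval]; exact h2

/-- In the midpoint region of the two vs. one game, with
`β = cos(φ(s_mid))/ν` and `|β| < 1`, the derivative of
`J_mid = (1/2)·d(s_{D_i},s_{D_j}) − ‖γ(s_mid) − x_A‖/ν` equals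
`(1/2)((1−β)ω_{D_j} − (1+β)ω_{D_i}) + (1/ν)·û·u_A` where `û` is the unit vector from `x_A`
to `γ(s_mid)`. `(ω_{D_i}, ω_{D_j}) = (1,−1)` minimizes and `u_A = ν·û` maximizes this
expression, and at the saddle point the derivative is zero. -/
theorem Jmid_derivative_saddle
    (ν : ℝ) (hν : ν ∈ Set.Ioc (0:ℝ) 1)
    (γ γT : ℝ → E2)
    (hγ : ∀ s, HasDerivAt γ (γT s) s)
    (hunit : ∀ s, ‖γT s‖ = 1)
    (sDi sDj : ℝ → ℝ) (xA uA : ℝ → E2) (ωi ωj : ℝ) (t : ℝ)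
    (hi : HasDerivAt sDi ωi t) (hj : HasDerivAt sDj ωj t)
    (hωi : |ωi| ≤ 1) (hωj : |ωj| ≤ 1)
    (hx : HasDerivAt xA (uA t) t)
    (smid : ℝ → ℝ) (hsmid : ∀ τ, smid τ = (sDi τ + sDj τ) / 2)
    (hne : γ (smid t) ≠ xA t)
    (u : E2) (hu : u = (‖γ (smid t) - xA t‖)⁻¹ • (γ (smid t) - xA t))
    (β : ℝ) (hβdef : β = ⟪u, γT (smid t)⟫_ℝ / ν)
    (hβ : |β| < 1) :
    HasDerivAt (fun τ => (sDj τ - sDi τ) / 2 - ‖γ (smid τ) - xA τ‖ / ν)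
      ((1/2) * ((1 - β) * ωj - (1 + β) * ωi) + (1/ν) * ⟪u, uA t⟫_ℝ) t ∧
    (∀ wi ∈ Set.Icc (-1:ℝ) 1, ∀ wj ∈ Set.Icc (-1:ℝ) 1,
      (1/2) * ((1 - β) * (-1) - (1 + β) * 1) ≤ (1/2) * ((1 - β) * wj - (1 + β) * wi)) ∧
    (∀ w : E2, ‖w‖ ≤ ν → ⟪u, w⟫_ℝ ≤ ⟪u, ν • u⟫_ℝ) ∧
    (1/2) * (-(1 - β) - (1 + β)) + 1 = 0 := by
  obtain ⟨hν0, hν1⟩ := hν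
  have hβ1 : -1 < β := (abs_lt.mp hβ).1
  have hβ2 : β < 1 := (abs_lt.mp hβ).2
  have hf0 : γ (smid t) - xA t ≠ 0 := sub_ne_zero.mpr hne
  have hnpos : (0:ℝ) < ‖γ (smid t) - xA t‖ := norm_pos_iff.mpr hf0
  have hunorm : ‖u‖ = 1 := by
    rw [hu, norm_smul, norm_inv, norm_norm, inv_mul_cancel₀ (ne_of_gt hnpos)]
  refine ⟨?_, ?_, ?_, by ring⟩
  · -- derivative
    have hsmeq : smid = fun τ => (sDi τ + sDj τ) / 2 := funext hsmid
    have hsm : HasDerivAt smid ((ωi + ωj) / 2) t := by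
      rw [hsmeq]; exact (hi.add hj).div_const 2
    have hγc : HasDerivAt (fun τ => γ (smid τ)) (((ωi + ωj) / 2) • γT (smid t)) t := by
      exact (by simpa [mul_smul, mul_comm] using (hγ (smid t)).scomp t hsm :
        HasDerivAt (γ ∘ smid) (((ωi + ωj) / 2) • γT (smid t)) t)
    have hfd : HasDerivAt (fun τ => γ (smid τ) - xA τ)
        (((ωi + ωj) / 2) • γT (smid t) - uA t) t := hγc.sub hx
    have hnd := hasDerivAt_norm_aux hfd hf0
    have hJ : HasDerivAt (fun τ => (sDj τ - sDi τ) / 2 - ‖γ (smid τ) - xA τ‖ / ν)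
        ((ωj - ωi) / 2 -
          (⟪γ (smid t) - xA t, ((ωi + ωj) / 2) • γT (smid t) - uA t⟫_ℝ
            / ‖γ (smid t) - xA t‖) / ν) t :=
      ((hj.sub hi).div_const 2).sub (hnd.div_const ν)
    convert hJ using 1
    have hinner : ⟪γ (smid t) - xA t, ((ωi + ωj) / 2) • γT (smid t) - uA t⟫_ℝ
        / ‖γ (smid t) - xA t‖
        = ⟪u, ((ωi + ωj) / 2) • γT (smid t) - uA t⟫_ℝ := by
      rw [hu, real_inner_smul_left]; ring
    rw [hinner, inner_sub_right, real_inner_smul_right]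
    have hβγ : ⟪u, γT (smid t)⟫_ℝ = ν * β := by
      rw [hβdef]; field_simp
    rw [hβγ]
    field_simp
    ring
  · -- min
    intro wi hwi wj hwj
    obtain ⟨hwi1, hwi2⟩ := hwi
    obtain ⟨hwj1, hwj2⟩ := hwj
    nlinarith
  · -- max
    intro w hw
    have h1 : ⟪u, w⟫_ℝ ≤ ‖u‖ * ‖w‖ := real_inner_le_norm u w
    have h2 : ⟪u, ν • u⟫_ℝ = ν := by
      rw [real_inner_smul_right, real_inner_self_eq_norm_sq, hunorm]; ring
    rw [h2, hunorm] at *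
    nlinarith
  
end
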